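/- Let X be a measurable space, f̂ : X → ℝ a measurable function (a fixed regression model), and let (X₁,Y₁),…,(X_n,Y_n),(X_{n+1},Y_{n+1}) be i.i.d. random pairs in X × ℝ on a probability space (Ω, P). Define the nonconformity scores Sᵢ = |Yᵢ − f̂(Xᵢ)|. Let α ∈ (0,1) with ⌈(n+1)(1−α)⌉ ≤ n, and let q̂ denote the ⌈(n+1)(1−α)⌉-th smallest value among S₁,…,S_n. Then P( f̂(X_{n+1}) − q̂ ≤ Y_{n+1} ≤ f̂(X_{n+1}) + q̂ ) ≥ 1 − α. -/

import Mathlib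

open MeasureTheory ProbabilityTheory
open scoped Classical
open scoped ENNReal
set_option maxHeartbeats 1600000

/-- The `k`-th smallest value (order statistic of rank `k`, with `1 ≤ k ≤ n`) of the
finite family `f : Fin n → ℝ`: the infimum of the set of `x` such that at least `k`
of the values `f i` are `≤ x`. -/
noncomputable def kthSmallest (n : ℕ) (f : Fin n → ℝ) (k : ℕ) : ℝ :=
  sInf {x : ℝ | k ≤ (Finset.univ.filter (fun i => f i ≤ x)).card}

/-! ### Auxiliary lemmas -/

lemma le_kthSmallest_iff' {n : ℕ} (s : Fin n → ℝ) {k : ℕ} (hk1 : 1 ≤ k) (hkn : k ≤ n)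
    (t : ℝ) :
    t ≤ sInf {x : ℝ | k ≤ (Finset.univ.filter (fun i => s i ≤ x)).card} ↔
      (Finset.univ.filter (fun i => s i < t)).card < k := by
  have hn : 0 < n := lt_of_lt_of_le hk1 hkn
  have hne : (Finset.univ : Finset (Fin n)).Nonempty := ⟨⟨0, hn⟩, Finset.mem_univ _⟩
  set A := {x : ℝ | k ≤ (Finset.univ.filter (fun i => s i ≤ x)).card} with hA
  have hAne : A.Nonempty := by
    refine ⟨Finset.univ.sup' hne s, ?_⟩
    have hfu : (Finset.univ.filter (fun i => s i ≤ Finset.univ.sup' hne s)) = Finset.univ :=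
      Finset.filter_true_of_mem fun i _ => Finset.le_sup' s (Finset.mem_univ i)
    simp only [hA, Set.mem_setOf_eq, hfu, Finset.card_univ, Fintype.card_fin]
    exact hkn
  have hAbdd : BddBelow A := by
    refine ⟨Finset.univ.inf' hne s, fun x hx => ?_⟩
    obtain ⟨i, hi⟩ : (Finset.univ.filter (fun i => s i ≤ x)).Nonempty :=
      Finset.card_pos.mp (lt_of_lt_of_le hk1 hx)
    exact le_trans (Finset.inf'_le s (Finset.mem_univ i)) (Finset.mem_filter.mp hi).2
  constructor
  · intro h
    by_contra hc
    push_neg at hc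
    set F := Finset.univ.filter (fun i => s i < t) with hF
    have hFne : F.Nonempty := Finset.card_pos.mp (lt_of_lt_of_le hk1 hc)
    set x := F.sup' hFne s with hx
    have hxt : x < t := by
      refine Finset.sup'_lt_iff hFne |>.mpr fun i hi => ?_
      exact (Finset.mem_filter.mp hi).2
    have hxA : x ∈ A := by
      show k ≤ _
      refine le_trans hc (Finset.card_le_card fun i hi => ?_)
      exact Finset.mem_filter.mpr ⟨Finset.mem_univ i, Finset.le_sup' s hi⟩
    have h1 := csInf_le hAbdd hxA
    linarith [le_trans h h1]
  · intro h
    refine le_csInf hAne fun x hx => ?_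
    by_contra hxt
    push_neg at hxt
    have hsub : (Finset.univ.filter (fun i => s i ≤ x)) ⊆ Finset.univ.filter (fun i => s i < t) := by
      intro i hi
      simp only [Finset.mem_filter, Finset.mem_univ, true_and] at hi ⊢
      linarith
    have := le_trans hx (Finset.card_le_card hsub)
    omega

lemma card_highrank_le {m k : ℕ} (hk1 : 1 ≤ k) (x : Fin m → ℝ) :
    (Finset.univ.filter
      (fun j => k ≤ (Finset.univ.filter (fun i => x i < x j)).card)).card ≤ m - k := by
  set T := Finset.univ.filter
      (fun j => k ≤ (Finset.univ.filter (fun i => x i < x j)).card) with hT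
  rcases T.eq_empty_or_nonempty with h | h
  · simp [h]
  · obtain ⟨j0, hj0T, hj0min⟩ := Finset.exists_min_image T x h
    have hsub : Finset.univ.filter (fun i => x i < x j0) ⊆ Finset.univ \ T := by
      intro i hi
      simp only [Finset.mem_filter, Finset.mem_univ, true_and] at hi
      refine Finset.mem_sdiff.mpr ⟨Finset.mem_univ i, fun hiT => ?_⟩
      exact absurd (hj0min i hiT) (not_le.mpr hi)
    have hk' : k ≤ (Finset.univ \ T).card :=
      le_trans (Finset.mem_filter.mp hj0T).2 (Finset.card_le_card hsub)
    have hcard : (Finset.univ \ T).card = m - T.card := by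
      rw [Finset.card_sdiff_of_subset (Finset.subset_univ T), Finset.card_univ, Fintype.card_fin]
    omega

lemma pi_map_comp_perm {m : ℕ} (ν : Measure ℝ) [IsProbabilityMeasure ν]
    (σ : Equiv.Perm (Fin m)) :
    (Measure.pi (fun _ : Fin m => ν)).map (fun x => x ∘ σ) = Measure.pi (fun _ : Fin m => ν) := by
  have hmeas : Measurable (fun x : Fin m → ℝ => x ∘ σ) :=
    measurable_pi_lambda _ fun i => measurable_pi_apply _
  refine (Measure.pi_eq fun s hs => ?_).symm
  rw [Measure.map_apply hmeas (MeasurableSet.univ_pi hs)]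
  have hpre : (fun x : Fin m → ℝ => x ∘ σ) ⁻¹' Set.univ.pi s
      = Set.univ.pi (fun j => s (σ.symm j)) := by
    ext x
    simp only [Set.mem_preimage, Set.mem_pi, Set.mem_univ, true_implies, Function.comp]
    exact ⟨fun h j => by simpa using h (σ.symm j), fun h i => by simpa using h (σ i)⟩
  rw [hpre, Measure.pi_pi]
  exact Equiv.prod_comp σ.symm (fun i => ν (s i))

lemma measurable_cnt {m : ℕ} (j : Fin m) :
    Measurable (fun x : Fin m → ℝ => (Finset.univ.filter (fun i => x i < x j)).card) := by
  have h : (fun x : Fin m → ℝ => (Finset.univ.filter (fun i => x i < x j)).card)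
      = fun x => ∑ i : Fin m, if x i < x j then 1 else 0 := by
    funext x; rw [Finset.card_filter]
  rw [h]
  exact Finset.measurable_sum _ fun i _ =>
    Measurable.ite (measurableSet_lt (measurable_pi_apply i) (measurable_pi_apply j))
      measurable_const measurable_const

lemma cnt_comp_perm {m : ℕ} (x : Fin m → ℝ) (σ : Equiv.Perm (Fin m)) (j : Fin m) :
    (Finset.univ.filter (fun i => (x ∘ σ) i < (x ∘ σ) j)).card
      = (Finset.univ.filter (fun i => x i < x (σ j))).card := by
  rw [Finset.card_filter, Finset.card_filter]
  exact Equiv.sum_comp σ (fun i => if x i < x (σ j) then 1 else 0)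

/-- Split conformal regression interval guarantee: for a fixed regression model `f̂` and
i.i.d. pairs `(X₀,Y₀), …, (Xₙ,Yₙ)`, letting `q̂` be the `⌈(n+1)(1-α)⌉`-th smallest of the
calibration scores `|Yᵢ - f̂(Xᵢ)|` (for `i < n`), the interval
`[f̂(Xₙ) - q̂, f̂(Xₙ) + q̂]` covers `Yₙ` with probability at least `1 - α`. -/
theorem stmt3 {X : Type*} [MeasurableSpace X]
    {Ω : Type*} [MeasurableSpace Ω] (P : Measure Ω) [IsProbabilityMeasure P]
    (fhat : X → ℝ) (hf : Measurable fhat)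
    (n : ℕ) (hn : 0 < n)
    (W : Fin (n + 1) → Ω → X × ℝ) (hWm : ∀ i, Measurable (W i))
    (hWi : iIndepFun W P)
    (hWid : ∀ i j, IdentDistrib (W i) (W j) P P)
    (α : ℝ) (hα : α ∈ Set.Ioo (0:ℝ) 1)
    (hk : ⌈((n : ℝ) + 1) * (1 - α)⌉₊ ≤ n) :
    ENNReal.ofReal (1 - α) ≤
      P {ω |
        fhat (W (Fin.last n) ω).1 -
            kthSmallest n (fun i : Fin n => |(W i.castSucc ω).2 - fhat (W i.castSucc ω).1|)
              ⌈((n : ℝ) + 1) * (1 - α)⌉₊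
          ≤ (W (Fin.last n) ω).2 ∧
        (W (Fin.last n) ω).2 ≤
          fhat (W (Fin.last n) ω).1 +
            kthSmallest n (fun i : Fin n => |(W i.castSucc ω).2 - fhat (W i.castSucc ω).1|)
              ⌈((n : ℝ) + 1) * (1 - α)⌉₊} := by
  obtain ⟨hα0, hα1⟩ := hα
  set k := ⌈((n : ℝ) + 1) * (1 - α)⌉₊ with hk_def
  have hk1 : 1 ≤ k := by
    have hpos : (0:ℝ) < ((n:ℝ)+1) * (1-α) := by
      apply mul_pos
      · positivity
      · linarith
    exact Nat.ceil_pos.mpr hpos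
  -- scores
  set g : X × ℝ → ℝ := fun p => |p.2 - fhat p.1| with hg_def
  have hg : Measurable g := (measurable_snd.sub (hf.comp measurable_fst)).abs
  set S : Fin (n+1) → Ω → ℝ := fun i => g ∘ W i with hS_def
  have hSm : ∀ i, Measurable (S i) := fun i => hg.comp (hWm i)
  have hSi : iIndepFun S P := hWi.comp (fun _ => g) (fun _ => hg)
  set ν : Measure ℝ := P.map (S (Fin.last n)) with hν_def
  haveI hν : IsProbabilityMeasure ν := Measure.isProbabilityMeasure_map (hSm _).aemeasurable
  have hmapS : ∀ i, P.map (S i) = ν := fun i => ((hWid i (Fin.last n)).comp hg).map_eq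
  set vec : Ω → (Fin (n+1) → ℝ) := fun ω i => S i ω with hvec_def
  have hvecm : Measurable vec := measurable_pi_lambda _ hSm
  have hjoint : P.map vec = Measure.pi (fun _ : Fin (n+1) => ν) := by
    refine (Measure.pi_eq fun s hs => ?_).symm
    rw [Measure.map_apply hvecm (MeasurableSet.univ_pi hs)]
    have hpre : vec ⁻¹' Set.univ.pi s = ⋂ i ∈ Finset.univ, S i ⁻¹' s i := by
      ext ω
      simp [hvec_def, Set.mem_pi]
    rw [hpre, hSi.measure_inter_preimage_eq_mul Finset.univ (fun i _ => hs i)]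
    exact Finset.prod_congr rfl fun i _ => by
      rw [← hmapS i, Measure.map_apply (hSm i) (hs i)]
  set μ := P.map vec with hμ_def
  haveI hμprob : IsProbabilityMeasure μ := Measure.isProbabilityMeasure_map hvecm.aemeasurable
  -- bad sets
  set B : Fin (n+1) → Set (Fin (n+1) → ℝ) :=
    fun j => {x | k ≤ (Finset.univ.filter (fun i => x i < x j)).card} with hB_def
  have hBmeas : ∀ j, MeasurableSet (B j) := by
    intro j
    have : B j = (fun x : Fin (n+1) → ℝ =>
        (Finset.univ.filter (fun i => x i < x j)).card) ⁻¹' (Set.Ici k) := rfl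
    rw [this]
    exact measurable_cnt j (measurableSet_Ici)
  have hBeq : ∀ j, μ (B j) = μ (B (Fin.last n)) := by
    intro j
    set σ := Equiv.swap j (Fin.last n) with hσ_def
    have hcomp : Measurable (fun x : Fin (n+1) → ℝ => x ∘ σ) :=
      measurable_pi_lambda _ fun i => measurable_pi_apply _
    have hpre : B j = (fun x : Fin (n+1) → ℝ => x ∘ σ) ⁻¹' B (Fin.last n) := by
      ext x
      simp only [hB_def, Set.mem_preimage, Set.mem_setOf_eq]
      rw [cnt_comp_perm x σ (Fin.last n), Equiv.swap_apply_right]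
    calc μ (B j) = μ ((fun x : Fin (n+1) → ℝ => x ∘ σ) ⁻¹' B (Fin.last n)) := by rw [hpre]
      _ = (μ.map (fun x : Fin (n+1) → ℝ => x ∘ σ)) (B (Fin.last n)) :=
          (Measure.map_apply hcomp (hBmeas _)).symm
      _ = μ (B (Fin.last n)) := by rw [hjoint, pi_map_comp_perm]
  -- sum of measures bound
  have hsum : ((n:ℝ≥0∞) + 1) * μ (B (Fin.last n)) ≤ ((n + 1 - k : ℕ) : ℝ≥0∞) := by
    have h1 : ∑ j : Fin (n+1), μ (B j) = ((n:ℝ≥0∞)+1) * μ (B (Fin.last n)) := by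
      rw [Finset.sum_congr rfl (fun j _ => hBeq j), Finset.sum_const, Finset.card_univ,
        Fintype.card_fin, nsmul_eq_mul]
      push_cast
      ring
    rw [← h1]
    calc ∑ j : Fin (n+1), μ (B j)
        = ∑ j : Fin (n+1), ∫⁻ x, (B j).indicator 1 x ∂μ := by
          exact Finset.sum_congr rfl fun j _ => (lintegral_indicator_one (hBmeas j)).symm
      _ = ∫⁻ x, ∑ j : Fin (n+1), (B j).indicator 1 x ∂μ :=
          (lintegral_finset_sum _ fun j _ => measurable_one.indicator (hBmeas j)).symm
      _ ≤ ∫⁻ _, ((n + 1 - k : ℕ) : ℝ≥0∞) ∂μ := by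
          refine lintegral_mono fun x => ?_
          have hx : ∑ j : Fin (n+1), (B j).indicator (1 : (Fin (n+1) → ℝ) → ℝ≥0∞) x
              = ((Finset.univ.filter (fun j : Fin (n+1) => x ∈ B j)).card : ℝ≥0∞) := by
            rw [Finset.card_filter, Nat.cast_sum]
            refine Finset.sum_congr rfl fun j _ => ?_
            by_cases h : x ∈ B j <;> simp [h]
          rw [hx]
          have hcard : (Finset.univ.filter (fun j : Fin (n+1) => x ∈ B j)).card ≤ n + 1 - k :=
            card_highrank_le hk1 x
          exact Nat.cast_le.mpr hcard
      _ = ((n + 1 - k : ℕ) : ℝ≥0∞) := by simp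
  -- bound the bad probability by α
  have hμB : μ (B (Fin.last n)) ≤ ENNReal.ofReal α := by
    have hkn1 : k ≤ n + 1 := le_trans hk (Nat.le_succ n)
    have hle : ((n:ℝ)+1) * (1-α) ≤ (k:ℝ) := Nat.le_ceil _
    have hreal : ((n + 1 - k : ℕ) : ℝ) ≤ α * ((n:ℝ)+1) := by
      rw [Nat.cast_sub hkn1]
      push_cast
      nlinarith
    have hofn : ENNReal.ofReal ((n:ℝ)+1) = (n:ℝ≥0∞)+1 := by
      rw [ENNReal.ofReal_add (Nat.cast_nonneg n) zero_le_one, ENNReal.ofReal_natCast,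
        ENNReal.ofReal_one]
    have h2 : ((n + 1 - k : ℕ) : ℝ≥0∞) ≤ ((n:ℝ≥0∞)+1) * ENNReal.ofReal α := by
      rw [← ENNReal.ofReal_natCast (n + 1 - k)]
      calc ENNReal.ofReal ((n + 1 - k : ℕ) : ℝ)
          ≤ ENNReal.ofReal (α * ((n:ℝ)+1)) := ENNReal.ofReal_le_ofReal hreal
        _ = ENNReal.ofReal α * ENNReal.ofReal ((n:ℝ)+1) := ENNReal.ofReal_mul hα0.le
        _ = ((n:ℝ≥0∞)+1) * ENNReal.ofReal α := by rw [hofn, mul_comm]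
    have hne : ((n:ℝ≥0∞)+1) ≠ 0 := by simp
    have hnt : ((n:ℝ≥0∞)+1) ≠ ⊤ := by simp
    exact (ENNReal.mul_le_mul_iff_right hne hnt).mp (le_trans hsum h2)
  -- identify the good event
  have hset : {ω |
        fhat (W (Fin.last n) ω).1 -
            kthSmallest n (fun i : Fin n => |(W i.castSucc ω).2 - fhat (W i.castSucc ω).1|) k
          ≤ (W (Fin.last n) ω).2 ∧
        (W (Fin.last n) ω).2 ≤
          fhat (W (Fin.last n) ω).1 +
            kthSmallest n (fun i : Fin n => |(W i.castSucc ω).2 - fhat (W i.castSucc ω).1|) k}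
      = (vec ⁻¹' B (Fin.last n))ᶜ := by
    ext ω
    simp only [Set.mem_setOf_eq, Set.mem_compl_iff, Set.mem_preimage, hB_def, not_le]
    have hfun : (fun i : Fin n => |(W i.castSucc ω).2 - fhat (W i.castSucc ω).1|)
        = fun i : Fin n => S i.castSucc ω := rfl
    rw [hfun]
    have habs : (fhat (W (Fin.last n) ω).1 -
            kthSmallest n (fun i : Fin n => S i.castSucc ω) k ≤ (W (Fin.last n) ω).2 ∧
        (W (Fin.last n) ω).2 ≤ fhat (W (Fin.last n) ω).1 +
            kthSmallest n (fun i : Fin n => S i.castSucc ω) k)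
        ↔ S (Fin.last n) ω ≤ kthSmallest n (fun i : Fin n => S i.castSucc ω) k := by
      have hSl : S (Fin.last n) ω = |(W (Fin.last n) ω).2 - fhat (W (Fin.last n) ω).1| := rfl
      rw [hSl, abs_le]
      constructor
      · rintro ⟨h1, h2⟩
        exact ⟨by linarith, by linarith⟩
      · rintro ⟨h1, h2⟩
        exact ⟨by linarith, by linarith⟩
    rw [habs, kthSmallest,
      le_kthSmallest_iff' (fun i : Fin n => S i.castSucc ω) hk1 hk (S (Fin.last n) ω)]
    have hbridge : (Finset.univ.filter (fun i : Fin (n+1) => vec ω i < vec ω (Fin.last n))).card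
        = (Finset.univ.filter (fun i : Fin n => S i.castSucc ω < S (Fin.last n) ω)).card := by
      rw [Finset.card_filter, Finset.card_filter, Fin.sum_univ_castSucc]
      simp [hvec_def]
    rw [hbridge]
  rw [hset]
  rw [prob_compl_eq_one_sub (hvecm (hBmeas _))]
  have hPbad : P (vec ⁻¹' B (Fin.last n)) = μ (B (Fin.last n)) :=
    (Measure.map_apply hvecm (hBmeas _)).symm
  rw [hPbad]
  have hsplit : ENNReal.ofReal (1 - α) = 1 - ENNReal.ofReal α := by
    rw [ENNReal.ofReal_sub _ hα0.le, ENNReal.ofReal_one]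
  rw [hsplit]
  exact tsub_le_tsub_left hμB 1
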